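/- On R^4, define P with nonzero entries P^{12} = p12, P^{24} = p24, P^{34} = p34, and P' with nonzero entries P'^{12} = a21 x1, P'^{24} = p'_{24} + a61 x1 + a63 x3, P'^{34} = a73 x3 (all constants real). Then [P,P] = 0, [P',P'] = 0 and [P,P'] = 0, i.e., P and P' are compatible Poisson structures, and if p12 p34 ≠ 0 the functions H1 = a21 x1/p12 + a73 x3/p34 and H2 = a21^2 x1^2/(2 p12^2) + a73^2 x3^2/(2 p34^2) satisfy {H1,H2} = {H1,H2}' = 0. -/

import Mathlib

open scoped BigOperators

noncomputable def pd {m : ℕ} (μ : Fin m) (f : (Fin m → ℝ) → ℝ) (x : Fin m → ℝ) : ℝ :=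
  fderiv ℝ f x (Pi.single μ 1)

/-- Poisson bracket associated to a bivector field `P`. -/
noncomputable def pbrk {m : ℕ} (P : (Fin m → ℝ) → Fin m → Fin m → ℝ)
    (f g : (Fin m → ℝ) → ℝ) (x : Fin m → ℝ) : ℝ :=
  ∑ μ, ∑ ν, P x μ ν * pd μ f x * pd ν g x

/-- Schouten bracket `[P,P]^{λμν}`. -/
noncomputable def schouten {m : ℕ} (P : (Fin m → ℝ) → Fin m → Fin m → ℝ)
    (l μ ν : Fin m) (x : Fin m → ℝ) : ℝ :=
  ∑ ρ, (P x ρ l * pd ρ (fun y => P y μ ν) x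
      + P x ρ ν * pd ρ (fun y => P y l μ) x
      + P x ρ μ * pd ρ (fun y => P y ν l) x)

/-- Mixed Schouten bracket `[P,Q]^{λμν}`. -/
noncomputable def schoutenMixed {m : ℕ} (P Q : (Fin m → ℝ) → Fin m → Fin m → ℝ)
    (l μ ν : Fin m) (x : Fin m → ℝ) : ℝ :=
  ∑ ρ, (P x ρ l * pd ρ (fun y => Q y μ ν) x + Q x ρ l * pd ρ (fun y => P y μ ν) x
      + P x ρ ν * pd ρ (fun y => Q y l μ) x + Q x ρ ν * pd ρ (fun y => P y l μ) x
      + P x ρ μ * pd ρ (fun y => Q y ν l) x + Q x ρ μ * pd ρ (fun y => P y ν l) x)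

/-- The Poisson bivector `P` on the group `A_2 ⊕ A_2`. -/
noncomputable def PA2A2 (p12 p24 p34 : ℝ) : (Fin 4 → ℝ) → Fin 4 → Fin 4 → ℝ :=
  fun _ μ ν =>
    !![0, p12, 0, 0;
       -p12, 0, 0, p24;
       0, 0, 0, p34;
       0, -p24, -p34, 0] μ ν

/-- The Poisson bivector `P'` on the group `A_2 ⊕ A_2`. -/
noncomputable def PA2A2' (p24' a21 a61 a63 a73 : ℝ) : (Fin 4 → ℝ) → Fin 4 → Fin 4 → ℝ :=
  fun x μ ν =>
    let A := a21 * x 0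
    let B := p24' + a61 * x 0 + a63 * x 2
    let C := a73 * x 2
    !![0, A, 0, 0;
       -A, 0, 0, B;
       0, 0, 0, C;
       0, -B, -C, 0] μ ν


section helpers

lemma pd_of_hasFDerivAt {m : ℕ} {f : (Fin m → ℝ) → ℝ} {L : (Fin m → ℝ) →L[ℝ] ℝ}
    {x : Fin m → ℝ} (h : HasFDerivAt f L x) (μ : Fin m) :
    pd μ f x = L (Pi.single μ 1) := by
  unfold pd; rw [h.fderiv]

lemma hasFDerivAt_coord {m : ℕ} (i : Fin m) (x : Fin m → ℝ) :
    HasFDerivAt (fun y : Fin m → ℝ => y i)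
      (ContinuousLinearMap.proj (R := ℝ) (φ := fun _ : Fin m => ℝ) i) x :=
  (ContinuousLinearMap.proj (R := ℝ) (φ := fun _ : Fin m => ℝ) i).hasFDerivAt

@[simp] lemma pd_const {m : ℕ} (c : ℝ) (μ : Fin m) (x : Fin m → ℝ) :
    pd μ (fun _ => c) x = 0 := by
  rw [pd_of_hasFDerivAt (hasFDerivAt_const c x)]; simp

@[simp] lemma pd_cmul {m : ℕ} (c : ℝ) (i ρ : Fin m) (x : Fin m → ℝ) :
    pd ρ (fun y => c * y i) x = if i = ρ then c else 0 := by
  rw [pd_of_hasFDerivAt ((hasFDerivAt_coord i x).const_mul c)]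
  simp only [ContinuousLinearMap.coe_smul', Pi.smul_apply, ContinuousLinearMap.proj_apply,
    Pi.single_apply, smul_eq_mul]
  split_ifs <;> ring

@[simp] lemma pd_neg_cmul {m : ℕ} (c : ℝ) (i ρ : Fin m) (x : Fin m → ℝ) :
    pd ρ (fun y => -(c * y i)) x = if i = ρ then -c else 0 := by
  rw [pd_of_hasFDerivAt (f := fun y : Fin m → ℝ => -(c * y i)) ((hasFDerivAt_coord i x).const_mul c).neg]
  simp only [ContinuousLinearMap.neg_apply, ContinuousLinearMap.coe_smul', Pi.smul_apply,
    ContinuousLinearMap.proj_apply, Pi.single_apply, smul_eq_mul]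
  split_ifs <;> ring

@[simp] lemma pd_aff (c a b : ℝ) (ρ : Fin 4) (x : Fin 4 → ℝ) :
    pd ρ (fun y => c + a * y 0 + b * y 2) x
      = (if (0:Fin 4) = ρ then a else 0) + (if (2:Fin 4) = ρ then b else 0) := by
  rw [pd_of_hasFDerivAt (f := fun y : Fin 4 → ℝ => c + a * y 0 + b * y 2) (((hasFDerivAt_const c x).add
    ((hasFDerivAt_coord 0 x).const_mul a)).add ((hasFDerivAt_coord 2 x).const_mul b))]
  simp only [ContinuousLinearMap.add_apply, ContinuousLinearMap.zero_apply,
    ContinuousLinearMap.coe_smul', Pi.smul_apply, ContinuousLinearMap.proj_apply,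
    Pi.single_apply, smul_eq_mul]
  split_ifs <;> ring

@[simp] lemma pd_neg_aff (c a b : ℝ) (ρ : Fin 4) (x : Fin 4 → ℝ) :
    pd ρ (fun y => -(c + a * y 0 + b * y 2)) x
      = -((if (0:Fin 4) = ρ then a else 0) + (if (2:Fin 4) = ρ then b else 0)) := by
  rw [pd_of_hasFDerivAt (f := fun y : Fin 4 → ℝ => -(c + a * y 0 + b * y 2)) ((((hasFDerivAt_const c x).add
    ((hasFDerivAt_coord 0 x).const_mul a)).add ((hasFDerivAt_coord 2 x).const_mul b)).neg)]
  simp only [ContinuousLinearMap.neg_apply, ContinuousLinearMap.add_apply,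
    ContinuousLinearMap.zero_apply, ContinuousLinearMap.coe_smul', Pi.smul_apply,
    ContinuousLinearMap.proj_apply, Pi.single_apply, smul_eq_mul]
  split_ifs <;> ring

@[simp] lemma pd_negB1 (c a b : ℝ) (ρ : Fin 4) (x : Fin 4 → ℝ) :
    pd ρ (fun y => -(b * y 2) + (-(a * y 0) - c)) x
      = -((if (0:Fin 4) = ρ then a else 0) + (if (2:Fin 4) = ρ then b else 0)) := by
  have e : (fun y : Fin 4 → ℝ => -(b * y 2) + (-(a * y 0) - c))
      = fun y => -(c + a * y 0 + b * y 2) := by funext y; ring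
  rw [e]; exact pd_neg_aff c a b ρ x

@[simp] lemma pd_negB2 (c a b : ℝ) (ρ : Fin 4) (x : Fin 4 → ℝ) :
    pd ρ (fun y => -(b * y 2) + (-(a * y 0) + -c)) x
      = -((if (0:Fin 4) = ρ then a else 0) + (if (2:Fin 4) = ρ then b else 0)) := by
  have e : (fun y : Fin 4 → ℝ => -(b * y 2) + (-(a * y 0) + -c))
      = fun y => -(c + a * y 0 + b * y 2) := by funext y; ring
  rw [e]; exact pd_neg_aff c a b ρ x

@[simp] lemma pd_H1form (a b p q : ℝ) (ρ : Fin 4) (x : Fin 4 → ℝ) :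
    pd ρ (fun y => a * y 0 / p + b * y 2 / q) x
      = (if (0:Fin 4) = ρ then a / p else 0) + (if (2:Fin 4) = ρ then b / q else 0) := by
  have e : (fun y : Fin 4 → ℝ => a * y 0 / p + b * y 2 / q)
      = fun y => (a / p) * y 0 + (b / q) * y 2 := by funext y; ring
  rw [e, pd_of_hasFDerivAt (f := fun y : Fin 4 → ℝ => (a / p) * y 0 + (b / q) * y 2) (((hasFDerivAt_coord 0 x).const_mul (a / p)).add
    ((hasFDerivAt_coord 2 x).const_mul (b / q)))]
  simp only [ContinuousLinearMap.add_apply, ContinuousLinearMap.coe_smul', Pi.smul_apply,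
    ContinuousLinearMap.proj_apply, Pi.single_apply, smul_eq_mul]
  split_ifs <;> ring

@[simp] lemma pd_H2form (a b p q : ℝ) (ρ : Fin 4) (x : Fin 4 → ℝ) :
    pd ρ (fun y => a * (y 0) ^ 2 / p + b * (y 2) ^ 2 / q) x
      = (if (0:Fin 4) = ρ then a * (2 * x 0) / p else 0)
        + (if (2:Fin 4) = ρ then b * (2 * x 2) / q else 0) := by
  have e : (fun y : Fin 4 → ℝ => a * (y 0) ^ 2 / p + b * (y 2) ^ 2 / q)
      = fun y => (a / p) * (y 0 * y 0) + (b / q) * (y 2 * y 2) := by funext y; ring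
  rw [e, pd_of_hasFDerivAt (f := fun y : Fin 4 → ℝ => (a / p) * (y 0 * y 0) + (b / q) * (y 2 * y 2)) ((((hasFDerivAt_coord 0 x).mul (hasFDerivAt_coord 0 x)).const_mul
      (a / p)).add (((hasFDerivAt_coord 2 x).mul (hasFDerivAt_coord 2 x)).const_mul (b / q)))]
  simp only [ContinuousLinearMap.add_apply, ContinuousLinearMap.coe_smul', Pi.smul_apply,
    ContinuousLinearMap.proj_apply, Pi.single_apply, smul_eq_mul]
  split_ifs <;> ring

end helpers

set_option maxHeartbeats 12000000 in
theorem A2A2_compatible_and_involution (p12 p24 p34 p24' a21 a61 a63 a73 : ℝ) :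
    ((∀ x l μ ν, schouten (PA2A2 p12 p24 p34) l μ ν x = 0) ∧
     (∀ x l μ ν, schouten (PA2A2' p24' a21 a61 a63 a73) l μ ν x = 0) ∧
     (∀ x l μ ν, schoutenMixed (PA2A2 p12 p24 p34)
        (PA2A2' p24' a21 a61 a63 a73) l μ ν x = 0)) ∧
    (p12 * p34 ≠ 0 →
      let H1 : (Fin 4 → ℝ) → ℝ := fun x => a21 * x 0 / p12 + a73 * x 2 / p34
      let H2 : (Fin 4 → ℝ) → ℝ := fun x =>
        a21 ^ 2 * (x 0) ^ 2 / (2 * p12 ^ 2) + a73 ^ 2 * (x 2) ^ 2 / (2 * p34 ^ 2)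
      (∀ x, pbrk (PA2A2 p12 p24 p34) H1 H2 x = 0) ∧
      (∀ x, pbrk (PA2A2' p24' a21 a61 a63 a73) H1 H2 x = 0)) := by
  refine ⟨⟨?_, ?_, ?_⟩, ?_⟩
  · intro x l μ ν
    simp [schouten, PA2A2]
  · intro x l μ ν
    fin_cases l <;> fin_cases μ <;> fin_cases ν <;>
      (simp only [schouten, PA2A2', Fin.sum_univ_four];
       simp [Matrix.vecHead, Matrix.vecTail]) <;> ring
  · intro x l μ ν
    fin_cases l <;> fin_cases μ <;> fin_cases ν <;>
      (simp only [schoutenMixed, PA2A2, PA2A2', Fin.sum_univ_four];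
       simp [Matrix.vecHead, Matrix.vecTail]) <;> ring
  · intro hp
    dsimp only
    constructor <;> intro x <;>
      (simp only [pbrk, PA2A2, PA2A2', Fin.sum_univ_four];
       simp [Matrix.vecHead, Matrix.vecTail]) <;> ring
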